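/- If R is distributed as a gamma random variable with shape d+1 and rate ε/Δ, and conditioned on R, Y is uniform on the cube [−R, R]^d, then Y has density on R^d proportional to exp(−(ε/Δ)‖y‖_∞). -/

import Mathlib

open MeasureTheory ProbabilityTheory

lemma cube_eq_pi (d : ℕ) (r : ℝ) :
    {y : Fin d → ℝ | ∀ j, |y j| ≤ r} = Set.pi Set.univ (fun _ => Set.Icc (-r) r) := by
  ext y
  simp only [Set.mem_setOf_eq, Set.mem_pi, Set.mem_univ, forall_true_left, Set.mem_Icc, abs_le]

lemma cube_measurable (d : ℕ) (r : ℝ) :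
    MeasurableSet {y : Fin d → ℝ | ∀ j, |y j| ≤ r} := by
  rw [cube_eq_pi]
  exact MeasurableSet.univ_pi fun _ => measurableSet_Icc

lemma cube_volume (d : ℕ) {r : ℝ} (hr : 0 ≤ r) :
    volume {y : Fin d → ℝ | ∀ j, |y j| ≤ r} = ENNReal.ofReal ((2*r)^d) := by
  rw [cube_eq_pi, volume_pi_pi]
  simp only [Real.volume_Icc]
  have h2 : r - -r = 2*r := by ring
  rw [h2, Finset.prod_const, Finset.card_univ, Fintype.card_fin,
    ← ENNReal.ofReal_pow (by linarith)]

lemma measurable_vol_inter (d : ℕ) {A : Set (Fin d → ℝ)} (hA : MeasurableSet A) :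
    Measurable fun r : ℝ => volume (A ∩ {y : Fin d → ℝ | ∀ j, |y j| ≤ r}) := by
  have hS : MeasurableSet {p : ℝ × (Fin d → ℝ) | p.2 ∈ A ∧ ∀ j, |p.2 j| ≤ p.1} := by
    have : {p : ℝ × (Fin d → ℝ) | p.2 ∈ A ∧ ∀ j, |p.2 j| ≤ p.1}
        = (Prod.snd ⁻¹' A) ∩ ⋂ j, {p : ℝ × (Fin d → ℝ) | |p.2 j| ≤ p.1} := by
      ext p; simp [Set.mem_iInter]
    rw [this]
    exact (measurable_snd hA).inter <| MeasurableSet.iInter fun j =>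
      measurableSet_le (by fun_prop) measurable_fst
  have h := measurable_measure_prodMk_left (ν := (volume : Measure (Fin d → ℝ))) hS
  have hset : ∀ r : ℝ, Prod.mk r ⁻¹' {p : ℝ × (Fin d → ℝ) | p.2 ∈ A ∧ ∀ j, |p.2 j| ≤ p.1}
      = A ∩ {y : Fin d → ℝ | ∀ j, |y j| ≤ r} := by
    intro r; ext y; simp [Set.mem_preimage, Set.mem_inter_iff]
  simpa only [hset] using h

lemma exp_lintegral_Ioi {l : ℝ} (hl : 0 < l) (t : ℝ) :
    ∫⁻ r in Set.Ioi t, ENNReal.ofReal (l * Real.exp (-(l * r)))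
      = ENNReal.ofReal (Real.exp (-(l * t))) := by
  have hint : MeasureTheory.IntegrableOn (fun r => l * Real.exp (-(l * r))) (Set.Ioi t) := by
    have := (exp_neg_integrableOn_Ioi t hl).const_mul l
    simp only [neg_mul] at this
    exact this
  rw [← ofReal_integral_eq_lintegral_ofReal hint
    (Filter.Eventually.of_forall fun x => by positivity)]
  congr 1
  have hderiv : ∀ x ∈ Set.Ioi t,
      HasDerivAt (fun x => -Real.exp (-(l * x))) (l * Real.exp (-(l * x))) x := by
    intro x _
    have h1 : HasDerivAt (fun x : ℝ => -(l * x)) (-l) x := by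
      simpa using ((hasDerivAt_id x).const_mul (-l))
    have h2 := h1.exp
    have h3 : HasDerivAt (fun x => -Real.exp (-(l * x))) (-(Real.exp (-(l * x)) * -l)) x := h2.neg
    rw [show l * Real.exp (-(l * x)) = -(Real.exp (-(l * x)) * -l) by ring]
    exact h3
  have hcont : ContinuousWithinAt (fun x => -Real.exp (-(l * x))) (Set.Ici t) t :=
    (Continuous.neg (by fun_prop)).continuousWithinAt
  have htend : Filter.Tendsto (fun x => -Real.exp (-(l * x))) Filter.atTop (nhds 0) := by
    have h1 : Filter.Tendsto (fun x : ℝ => l * x) Filter.atTop Filter.atTop :=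
      Filter.Tendsto.const_mul_atTop hl Filter.tendsto_id
    have h2 := Real.tendsto_exp_neg_atTop_nhds_zero.comp h1
    have := h2.neg
    simpa using this
  have := MeasureTheory.integral_Ioi_of_hasDerivAt_of_tendsto hcont hderiv hint htend
  rw [this]; ring


lemma cube_null (d : ℕ) (hd : 1 ≤ d) {r : ℝ} (hr : r ≤ 0) (A : Set (Fin d → ℝ)) :
    volume (A ∩ {y : Fin d → ℝ | ∀ j, |y j| ≤ r}) = 0 := by
  have hsub : A ∩ {y : Fin d → ℝ | ∀ j, |y j| ≤ r} ⊆ {y : Fin d → ℝ | ∀ j, |y j| ≤ (0:ℝ)} :=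
    fun y hy j => (hy.2 j).trans hr
  refine le_antisymm (le_trans (measure_mono hsub) ?_) (zero_le)
  rw [cube_volume d le_rfl]
  simp [zero_pow (by omega : d ≠ 0)]

lemma openCube_inter_eq (d : ℕ) (hd : 1 ≤ d) (A : Set (Fin d → ℝ)) (r : ℝ) :
    volume ({y : Fin d → ℝ | ‖y‖ < r} ∩ A) = volume (A ∩ {y : Fin d → ℝ | ∀ j, |y j| ≤ r}) := by
  rcases le_or_gt r 0 with hr | hr
  · have h1 : {y : Fin d → ℝ | ‖y‖ < r} = ∅ := by
      ext y
      simp only [Set.mem_setOf_eq, Set.mem_empty_iff_false, iff_false, not_lt]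
      exact hr.trans (norm_nonneg y)
    rw [h1, Set.empty_inter, measure_empty, cube_null d hd hr A]
  · have hmeasopen : MeasurableSet {y : Fin d → ℝ | ‖y‖ < r} :=
      measurableSet_lt (by fun_prop) measurable_const
    have hsub : {y : Fin d → ℝ | ‖y‖ < r} ⊆ {y : Fin d → ℝ | ∀ j, |y j| ≤ r} := by
      intro y hy j
      have h := norm_le_pi_norm y j
      rw [Real.norm_eq_abs] at h
      exact h.trans (le_of_lt hy)
    have hopen : {y : Fin d → ℝ | ‖y‖ < r} = Set.pi Set.univ (fun _ : Fin d => Set.Ioo (-r) r) := by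
      ext y
      simp only [Set.mem_setOf_eq, Set.mem_pi, Set.mem_univ, forall_true_left, Set.mem_Ioo]
      rw [pi_norm_lt_iff hr]
      refine forall_congr' fun j => ?_
      rw [Real.norm_eq_abs, abs_lt]
    have hvolopen : volume {y : Fin d → ℝ | ‖y‖ < r} = ENNReal.ofReal ((2*r)^d) := by
      rw [hopen, volume_pi_pi]
      simp only [Real.volume_Ioo]
      rw [show r - -r = 2*r by ring, Finset.prod_const, Finset.card_univ, Fintype.card_fin,
        ← ENNReal.ofReal_pow (by linarith)]
    have hdiff : volume ({y : Fin d → ℝ | ∀ j, |y j| ≤ r} \ {y : Fin d → ℝ | ‖y‖ < r}) = 0 := by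
      rw [measure_diff hsub hmeasopen.nullMeasurableSet
        (by rw [hvolopen]; exact ENNReal.ofReal_ne_top), cube_volume d hr.le, hvolopen, tsub_self]
    refine le_antisymm (measure_mono fun y hy => ⟨hy.2, hsub hy.1⟩) ?_
    calc volume (A ∩ {y : Fin d → ℝ | ∀ j, |y j| ≤ r})
        ≤ volume (({y : Fin d → ℝ | ‖y‖ < r} ∩ A)
            ∪ ({y : Fin d → ℝ | ∀ j, |y j| ≤ r} \ {y : Fin d → ℝ | ‖y‖ < r})) := by
          apply measure_mono
          rintro y ⟨hyA, hyC⟩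
          by_cases h : ‖y‖ < r
          · exact Or.inl ⟨h, hyA⟩
          · exact Or.inr ⟨hyC, h⟩
      _ ≤ volume ({y : Fin d → ℝ | ‖y‖ < r} ∩ A)
            + volume ({y : Fin d → ℝ | ∀ j, |y j| ≤ r} \ {y : Fin d → ℝ | ‖y‖ < r}) :=
          measure_union_le _ _
      _ = volume ({y : Fin d → ℝ | ‖y‖ < r} ∩ A) := by rw [hdiff, add_zero]

theorem gamma_uniform_mixture (d : ℕ) (hd : 1 ≤ d) (ε Δ : ℝ) (hε : 0 < ε) (hΔ : 0 < Δ) :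
    let ν : Measure (Fin d → ℝ) :=
      volume.withDensity (fun y => ENNReal.ofReal (Real.exp (-(ε / Δ) * ‖y‖)))
    let μ : Measure (Fin d → ℝ) := (ν Set.univ)⁻¹ • ν
    Measure.bind (gammaMeasure (d + 1) (ε / Δ))
      (fun r => (volume {y : Fin d → ℝ | ∀ j, |y j| ≤ r})⁻¹ •
        volume.restrict {y : Fin d → ℝ | ∀ j, |y j| ≤ r}) = μ := by
  intro ν μ
  have hν_def : ν = volume.withDensity (fun y => ENNReal.ofReal (Real.exp (-(ε / Δ) * ‖y‖))) := rfl
  have hμ_def : μ = (ν Set.univ)⁻¹ • ν := rfl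
  set l : ℝ := ε / Δ with hldef
  have hl : 0 < l := div_pos hε hΔ
  have hdpos : (0:ℝ) < (d:ℝ) + 1 := by positivity
  set κ : ℝ → Measure (Fin d → ℝ) := fun r =>
    (volume {y : Fin d → ℝ | ∀ j, |y j| ≤ r})⁻¹ •
      volume.restrict {y : Fin d → ℝ | ∀ j, |y j| ≤ r} with hκdef
  set K : ℝ := l ^ (d+1) / (d.factorial * 2 ^ d) with hKdef
  have hK : 0 < K := by positivity
  have hgpdf : Measurable (gammaPDF ((d:ℝ)+1) l) := (measurable_gammaPDFReal _ _).ennreal_ofReal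
  have hg0 : ∀ r : ℝ, r ≤ 0 → gammaPDF ((d:ℝ)+1) l r = 0 := by
    intro r hr
    rcases lt_or_eq_of_le hr with h | h
    · exact gammaPDF_of_neg h
    · subst h
      rw [gammaPDF_of_nonneg le_rfl, Real.zero_rpow (by
        rw [show ((d:ℝ)+1-1) = (d:ℝ) by ring]
        exact Nat.cast_ne_zero.mpr (by omega))]
      simp
  -- measurability of the kernel
  have hκmeas : Measurable κ := by
    apply Measure.measurable_of_measurable_coe
    intro s hs
    have h1 : ∀ r : ℝ, κ r s =
        (volume ((Set.univ : Set (Fin d → ℝ)) ∩ {y : Fin d → ℝ | ∀ j, |y j| ≤ r}))⁻¹ *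
          volume (s ∩ {y : Fin d → ℝ | ∀ j, |y j| ≤ r}) := by
      intro r
      simp [hκdef, Measure.smul_apply, smul_eq_mul, Measure.restrict_apply hs, Set.univ_inter]
    simp_rw [h1]
    exact ((measurable_vol_inter d MeasurableSet.univ).inv).mul (measurable_vol_inter d hs)
  -- the bind computation
  have hbind : ∀ (A : Set (Fin d → ℝ)), MeasurableSet A →
      Measure.bind (gammaMeasure ((d:ℝ) + 1) l) κ A
        = ENNReal.ofReal K *
            ∫⁻ r, ENNReal.ofReal (Real.exp (-(l * r)))
              * volume (A ∩ {y : Fin d → ℝ | ∀ j, |y j| ≤ r}) := by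
    intro A hA
    have hκA : Measurable (fun r => κ r A) := (Measure.measurable_coe hA).comp hκmeas
    rw [Measure.bind_apply hA hκmeas.aemeasurable, gammaMeasure,
      lintegral_withDensity_eq_lintegral_mul volume hgpdf hκA]
    have hpt : ∀ r : ℝ, (gammaPDF ((d:ℝ)+1) l * fun r => κ r A) r
        = ENNReal.ofReal K * (ENNReal.ofReal (Real.exp (-(l * r)))
            * volume (A ∩ {y : Fin d → ℝ | ∀ j, |y j| ≤ r})) := by
      intro r
      simp only [Pi.mul_apply, hκdef, Measure.smul_apply, smul_eq_mul,
        Measure.restrict_apply hA]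
      rcases lt_or_ge 0 r with hr | hr
      · have hr' : (0:ℝ) ≤ r := hr.le
        have h2r : (0:ℝ) < (2*r)^d := by positivity
        have key : gammaPDF ((d:ℝ)+1) l r * (volume {y : Fin d → ℝ | ∀ j, |y j| ≤ r})⁻¹
            = ENNReal.ofReal (K * Real.exp (-(l*r))) := by
          have hΓ : Real.Gamma ((d:ℝ)+1) = (d.factorial : ℝ) := Real.Gamma_nat_eq_factorial d
          have hrpow : r ^ ((d:ℝ)+1-1) = r ^ (d:ℕ) := by
            rw [show ((d:ℝ)+1-1) = ((d:ℕ):ℝ) by ring, Real.rpow_natCast]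
          have hlpow : l ^ ((d:ℝ)+1) = l ^ (d+1 : ℕ) := by
            rw [show ((d:ℝ)+1) = (((d+1:ℕ)):ℝ) by push_cast; ring, Real.rpow_natCast]
          rw [gammaPDF_of_nonneg hr', hΓ, hrpow, hlpow, cube_volume d hr',
            ← ENNReal.ofReal_inv_of_pos h2r, ← ENNReal.ofReal_mul (by positivity)]
          congr 1
          rw [hKdef, mul_pow]
          have h1 : ((d.factorial : ℝ)) ≠ 0 := by positivity
          have h2 : ((2:ℝ))^d ≠ 0 := by positivity
          have h3 : (r:ℝ)^d ≠ 0 := pow_ne_zero _ hr.ne'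
          field_simp
        rw [← mul_assoc, key, ENNReal.ofReal_mul hK.le, mul_assoc]
      · have hm := cube_null d hd hr A
        rw [hm, mul_zero, mul_zero, mul_zero, mul_zero]
    rw [lintegral_congr hpt, lintegral_const_mul' _ _ ENNReal.ofReal_ne_top]
  -- the withDensity computation
  have hν : ∀ (A : Set (Fin d → ℝ)), MeasurableSet A →
      ν A = ENNReal.ofReal l *
        ∫⁻ r, ENNReal.ofReal (Real.exp (-(l * r)))
          * volume (A ∩ {y : Fin d → ℝ | ∀ j, |y j| ≤ r}) := by
    intro A hA
    have hT : MeasurableSet {p : (Fin d → ℝ) × ℝ | ‖p.1‖ < p.2} :=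
      measurableSet_lt (by fun_prop) measurable_snd
    have hν1 : ν A = ∫⁻ y in A, ENNReal.ofReal (Real.exp (-(l * ‖y‖))) := by
      rw [hν_def, withDensity_apply _ hA]
      simp only [neg_mul]
    have hexp : ∀ y : Fin d → ℝ, ENNReal.ofReal (Real.exp (-(l * ‖y‖)))
        = ∫⁻ r, ({p : (Fin d → ℝ) × ℝ | ‖p.1‖ < p.2}.indicator
            (fun p => ENNReal.ofReal (l * Real.exp (-(l * p.2)))) (y, r)) := by
      intro y
      rw [← exp_lintegral_Ioi hl ‖y‖, ← lintegral_indicator measurableSet_Ioi]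
      refine lintegral_congr fun r => ?_
      by_cases h : ‖y‖ < r
      · simp [Set.indicator_apply, h, Set.mem_Ioi]
      · simp [Set.indicator_apply, h, Set.mem_Ioi]
    have hswapm : AEMeasurable (Function.uncurry fun (y : Fin d → ℝ) (r : ℝ) =>
        ({p : (Fin d → ℝ) × ℝ | ‖p.1‖ < p.2}.indicator
          (fun p => ENNReal.ofReal (l * Real.exp (-(l * p.2)))) (y, r)))
        ((volume.restrict A).prod volume) := by
      apply Measurable.aemeasurable
      have hF : Measurable ({p : (Fin d → ℝ) × ℝ | ‖p.1‖ < p.2}.indicator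
          (fun p => ENNReal.ofReal (l * Real.exp (-(l * p.2))))) :=
        (Measurable.ennreal_ofReal (by fun_prop)).indicator hT
      exact hF.comp (measurable_fst.prodMk measurable_snd)
    rw [hν1, lintegral_congr hexp, lintegral_lintegral_swap hswapm]
    have hinner : ∀ r : ℝ,
        (∫⁻ y in A, ({p : (Fin d → ℝ) × ℝ | ‖p.1‖ < p.2}.indicator
            (fun p => ENNReal.ofReal (l * Real.exp (-(l * p.2)))) (y, r)))
        = ENNReal.ofReal (l * Real.exp (-(l * r)))
            * volume (A ∩ {y : Fin d → ℝ | ∀ j, |y j| ≤ r}) := by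
      intro r
      have hball : MeasurableSet {y : Fin d → ℝ | ‖y‖ < r} :=
        measurableSet_lt (by fun_prop) measurable_const
      have h1 : ∀ y : Fin d → ℝ,
          ({p : (Fin d → ℝ) × ℝ | ‖p.1‖ < p.2}.indicator
            (fun p => ENNReal.ofReal (l * Real.exp (-(l * p.2)))) (y, r))
          = ({y : Fin d → ℝ | ‖y‖ < r}.indicator
              (fun _ => ENNReal.ofReal (l * Real.exp (-(l * r)))) y) := by
        intro y
        by_cases h : ‖y‖ < r
        · simp [Set.indicator_apply, h]
        · simp [Set.indicator_apply, h]
      rw [lintegral_congr h1, lintegral_indicator_const hball,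
        Measure.restrict_apply hball, openCube_inter_eq d hd A r]
    rw [lintegral_congr hinner]
    have h2 : ∀ r : ℝ, ENNReal.ofReal (l * Real.exp (-(l * r)))
        * volume (A ∩ {y : Fin d → ℝ | ∀ j, |y j| ≤ r})
        = ENNReal.ofReal l * (ENNReal.ofReal (Real.exp (-(l * r)))
            * volume (A ∩ {y : Fin d → ℝ | ∀ j, |y j| ≤ r})) := by
      intro r
      rw [ENNReal.ofReal_mul hl.le, mul_assoc]
    rw [lintegral_congr h2, lintegral_const_mul' _ _ ENNReal.ofReal_ne_top]
  -- total mass of the bind is 1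
  have hone : Measure.bind (gammaMeasure ((d:ℝ) + 1) l) κ Set.univ = 1 := by
    have hκU : Measurable (fun r => κ r Set.univ) :=
      (Measure.measurable_coe MeasurableSet.univ).comp hκmeas
    rw [Measure.bind_apply MeasurableSet.univ hκmeas.aemeasurable, gammaMeasure,
      lintegral_withDensity_eq_lintegral_mul volume hgpdf hκU]
    have hpt : ∀ r : ℝ, (gammaPDF ((d:ℝ)+1) l * fun r => κ r Set.univ) r
        = gammaPDF ((d:ℝ)+1) l r := by
      intro r
      simp only [Pi.mul_apply, hκdef, Measure.smul_apply, smul_eq_mul,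
        Measure.restrict_apply_univ]
      rcases lt_or_ge 0 r with hr | hr
      · rw [cube_volume d hr.le, ENNReal.inv_mul_cancel
          (ne_of_gt (ENNReal.ofReal_pos.mpr (by positivity))) ENNReal.ofReal_ne_top, mul_one]
      · have hm : volume {y : Fin d → ℝ | ∀ j, |y j| ≤ r} = 0 := by
          have := cube_null d hd hr Set.univ
          rwa [Set.univ_inter] at this
        rw [hm, mul_zero, mul_zero, hg0 r hr]
    rw [lintegral_congr hpt, lintegral_gammaPDF_eq_one hdpos hl]
  -- put everything together
  rw [hbind Set.univ MeasurableSet.univ] at hone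
  have hK0 : (ENNReal.ofReal K) ≠ 0 := ne_of_gt (ENNReal.ofReal_pos.mpr hK)
  have hinv : (∫⁻ r, ENNReal.ofReal (Real.exp (-(l * r)))
      * volume ((Set.univ : Set (Fin d → ℝ)) ∩ {y : Fin d → ℝ | ∀ j, |y j| ≤ r}))⁻¹
      = ENNReal.ofReal K := (ENNReal.eq_inv_of_mul_eq_one_left hone).symm
  have hl0 : (ENNReal.ofReal l) ≠ 0 := ne_of_gt (ENNReal.ofReal_pos.mpr hl)
  have hlt : (ENNReal.ofReal l) ≠ ⊤ := ENNReal.ofReal_ne_top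
  ext A hA
  rw [hμ_def, Measure.smul_apply, smul_eq_mul, hν Set.univ MeasurableSet.univ, hν A hA,
    hbind A hA, ENNReal.mul_inv (Or.inl hl0) (Or.inl hlt), hinv,
    mul_comm (ENNReal.ofReal l)⁻¹ (ENNReal.ofReal K), mul_assoc,
    ← mul_assoc (ENNReal.ofReal l)⁻¹, ENNReal.inv_mul_cancel hl0 hlt, one_mul]
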